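/- Let Ω ⊂ ℝ^m be open with finite positive measure, let γ_m = (2π)^m ω_m^{-2} λ_1(𝔅_m)^{-m/2} < 1, and set ε(Ω) = inf{ε > 0 : μ_Ω(ε) ≥ (1/2)(1 − γ_m)|Ω|}. If λ_n(Ω) is a Courant-sharp Dirichlet eigenvalue of Ω, then λ_n(Ω) ≤ (2π m² / ((1 − γ_m) ε(Ω)))². -/

import Mathlib

open MeasureTheory Real

/-- Upper bound for a Courant-sharp Dirichlet eigenvalue `Λ = λ_n(Ω)`:
assuming the Pleijel-type inequality `(ω_m/(2π)^m)(1-γ_m)|Ω|Λ^{m/2} ≤ R_Ω(Λ)` and the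
remainder bound `R_Ω(Λ) ≤ (ω_m/(2π)^m) μ_Ω(√m ε) Λ^{m/2} + (π m^{3/2} ω_m/(2π)^m)|Ω|Λ^{(m-1)/2}/ε`
for all `ε > 0`, we get `Λ ≤ (2π m² / ((1-γ_m) ε(Ω)))²` where
`ε(Ω) = inf{ε > 0 : μ_Ω(ε) ≥ (1/2)(1-γ_m)|Ω|}`. -/
theorem courant_sharp_eigenvalue_bound (m : ℕ) (hm : 0 < m)
    (Ω : Set (EuclideanSpace ℝ (Fin m))) (hΩ : IsOpen Ω)
    (hfin : volume Ω ≠ ⊤) (hpos : 0 < volume Ω)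
    (ωm : ℝ) (hωm : ωm = (volume (Metric.ball (0 : EuclideanSpace ℝ (Fin m)) 1)).toReal)
    (lam1B : ℝ) (hB : 0 < lam1B)
    (γ : ℝ) (hγ : γ = (2 * π) ^ m * (ωm ^ 2)⁻¹ * lam1B ^ (-((m : ℝ) / 2))) (hγ1 : γ < 1)
    (μ : ℝ → ℝ)
    (hμ : μ = fun ε => (volume {x ∈ Ω | Metric.infDist x (frontier Ω) < ε}).toReal)
    (Λ : ℝ) (hΛ : 0 < Λ) (R : ℝ → ℝ)
    (hPleijel : ωm / (2 * π) ^ m * (1 - γ) * (volume Ω).toReal * Λ ^ ((m : ℝ) / 2) ≤ R Λ)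
    (hR : ∀ ε : ℝ, 0 < ε →
      R Λ ≤ ωm / (2 * π) ^ m * μ (Real.sqrt m * ε) * Λ ^ ((m : ℝ) / 2) +
        π * (m : ℝ) ^ ((3 : ℝ) / 2) * ωm / (2 * π) ^ m * (volume Ω).toReal *
          Λ ^ (((m : ℝ) - 1) / 2) / ε) :
    Λ ≤ (2 * π * (m : ℝ) ^ 2 /
          ((1 - γ) * sInf {ε : ℝ | 0 < ε ∧ μ ε ≥ 1 / 2 * (1 - γ) * (volume Ω).toReal})) ^ 2 := by
  have hπ : (0:ℝ) < π := Real.pi_pos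
  have hγpos : (0:ℝ) < 1 - γ := by linarith
  have hm' : (0:ℝ) < (m:ℝ) := by exact_mod_cast hm
  set V : ℝ := (volume Ω).toReal with hV
  have hVpos : 0 < V := ENNReal.toReal_pos hpos.ne' hfin
  have hωpos : 0 < ωm := by
    rw [hωm]
    exact ENNReal.toReal_pos (Metric.measure_ball_pos volume 0 one_pos).ne'
      measure_ball_lt_top.ne
  have h2πm : (0:ℝ) < (2 * π) ^ m := by positivity
  have hc : (0:ℝ) < ωm / (2 * π) ^ m := div_pos hωpos h2πm
  have hs : (0:ℝ) < Real.sqrt Λ := Real.sqrt_pos.mpr hΛ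
  have hP : (0:ℝ) < Λ ^ ((m : ℝ) / 2) := Real.rpow_pos_of_pos hΛ _
  have hM : (0:ℝ) < (m : ℝ) ^ ((3 : ℝ) / 2) := Real.rpow_pos_of_pos hm' _
  -- the chosen ε
  set ε₀ : ℝ := 2 * π * (m : ℝ) ^ ((3 : ℝ) / 2) / ((1 - γ) * Real.sqrt Λ) with hε₀
  have hε₀pos : 0 < ε₀ := by positivity
  -- rpow identities
  have hQs : Λ ^ (((m : ℝ) - 1) / 2) * Real.sqrt Λ = Λ ^ ((m : ℝ) / 2) := by
    rw [Real.sqrt_eq_rpow, ← Real.rpow_add hΛ]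
    ring_nf
  have hmM : Real.sqrt (m : ℝ) * (m : ℝ) ^ ((3 : ℝ) / 2) = (m : ℝ) ^ 2 := by
    rw [Real.sqrt_eq_rpow, ← Real.rpow_add hm',
      show ((1:ℝ)/2 + 3/2) = ((2:ℕ) : ℝ) by norm_num, Real.rpow_natCast]
  -- the key inequality giving membership in the set
  have hmem : 1 / 2 * (1 - γ) * V ≤ μ (Real.sqrt m * ε₀) := by
    have h1 := hPleijel.trans (hR ε₀ hε₀pos)
    have heq : π * (m : ℝ) ^ ((3 : ℝ) / 2) * ωm / (2 * π) ^ m * V *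
        Λ ^ (((m : ℝ) - 1) / 2) / ε₀ =
        ωm / (2 * π) ^ m * (1 / 2 * (1 - γ) * V) * Λ ^ ((m : ℝ) / 2) := by
      rw [hε₀, ← hQs]
      field_simp
    rw [heq] at h1
    nlinarith [mul_pos hc hP]
  -- the set S
  set S : Set ℝ := {ε : ℝ | 0 < ε ∧ μ ε ≥ 1 / 2 * (1 - γ) * V} with hS
  have hε₁pos : 0 < Real.sqrt m * ε₀ := by positivity
  have hSne : (Real.sqrt m * ε₀) ∈ S := ⟨hε₁pos, hmem⟩
  -- monotonicity of μ
  have hμmono : ∀ a b : ℝ, a ≤ b → μ a ≤ μ b := by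
    intro a b hab
    rw [hμ]
    refine ENNReal.toReal_mono ?_ (measure_mono ?_)
    · exact ((measure_mono (fun x hx => hx.1)).trans_lt hfin.lt_top).ne
    · exact fun x hx => ⟨hx.1, lt_of_lt_of_le hx.2 hab⟩
  -- frontier is nonempty
  haveI : Nonempty (Fin m) := ⟨⟨0, hm⟩⟩
  have hfr : (frontier Ω).Nonempty := by
    rw [Set.nonempty_iff_ne_empty]
    intro h
    have hcl : IsClopen Ω := isClopen_iff_frontier_eq_empty.mpr h
    rcases isClopen_iff.mp hcl with h0 | h1
    · rw [h0] at hpos; simp at hpos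
    · rw [h1] at hfin
      exact hfin (measure_univ_of_isAddLeftInvariant _)
  -- every point of Ω is at positive distance from the frontier
  have hd : ∀ x ∈ Ω, 0 < Metric.infDist x (frontier Ω) := by
    intro x hx
    refine (isClosed_frontier.notMem_iff_infDist_pos hfr).mp ?_
    intro hxF
    rw [hΩ.frontier_eq] at hxF
    exact hxF.2 hx
  -- the shrinking sets
  set A : ℕ → Set (EuclideanSpace ℝ (Fin m)) :=
    fun n => {x ∈ Ω | Metric.infDist x (frontier Ω) < 1 / (n + 1)} with hA
  have hAmeas : ∀ n, NullMeasurableSet (A n) volume := by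
    intro n
    exact (hΩ.measurableSet.inter
      ((isOpen_lt (Metric.continuous_infDist_pt (frontier Ω))
        continuous_const).measurableSet)).nullMeasurableSet
  have hAanti : Antitone A := by
    intro n k hnk x hx
    refine ⟨hx.1, lt_of_lt_of_le hx.2 ?_⟩
    apply one_div_le_one_div_of_le (by positivity)
    exact_mod_cast Nat.add_le_add_right hnk 1
  have hAempty : ⋂ n, A n = ∅ := by
    ext x
    simp only [Set.mem_iInter, Set.mem_empty_iff_false, iff_false]
    intro hx
    have hx0 := (hx 0).1
    obtain ⟨n, hn⟩ := exists_nat_one_div_lt (hd x hx0)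
    exact absurd ((hx n).2) (not_lt.mpr hn.le)
  have hAfin : volume (A 0) ≠ ⊤ :=
    ((measure_mono (fun x hx => hx.1)).trans_lt hfin.lt_top).ne
  have htend : Filter.Tendsto (fun n => volume (A n)) Filter.atTop (nhds 0) := by
    have := tendsto_measure_iInter_atTop hAmeas hAanti ⟨0, hAfin⟩
    rwa [hAempty, measure_empty] at this
  set t : ℝ := 1 / 2 * (1 - γ) * V with ht
  have htpos : 0 < t := by positivity
  obtain ⟨n, hn⟩ : ∃ n : ℕ, volume (A n) < ENNReal.ofReal t := by
    have := htend.eventually (gt_mem_nhds (show (0 : ENNReal) < ENNReal.ofReal t from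
      ENNReal.ofReal_pos.mpr htpos))
    exact this.exists
  have hμn : μ (1 / (n + 1)) < t := by
    have : μ (1 / (n + 1)) = (volume (A n)).toReal := by rw [hμ]
    rw [this]
    exact ENNReal.toReal_lt_of_lt_ofReal hn
  -- lower bound on S
  have hlb : ∀ ε ∈ S, 1 / ((n:ℝ) + 1) ≤ ε := by
    intro ε hε
    by_contra hlt
    push_neg at hlt
    exact absurd (hε.2.trans (hμmono _ _ hlt.le)) (not_le.mpr hμn)
  have hSinf_pos : 0 < sInf S :=
    lt_of_lt_of_le (by positivity) (le_csInf ⟨_, hSne⟩ hlb)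
  have hSinf_le : sInf S ≤ Real.sqrt m * ε₀ := csInf_le ⟨_, hlb⟩ hSne
  -- value of √m * ε₀
  have hval : Real.sqrt m * ε₀ = 2 * π * (m:ℝ) ^ 2 / ((1 - γ) * Real.sqrt Λ) := by
    rw [hε₀, ← hmM]; ring
  rw [hval] at hSinf_le
  have h1 : sInf S * Real.sqrt Λ ≤ 2 * π * (m:ℝ) ^ 2 / (1 - γ) := by
    calc sInf S * Real.sqrt Λ
        ≤ (2 * π * (m:ℝ) ^ 2 / ((1 - γ) * Real.sqrt Λ)) * Real.sqrt Λ :=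
          mul_le_mul_of_nonneg_right hSinf_le hs.le
      _ = 2 * π * (m:ℝ) ^ 2 / (1 - γ) := by field_simp
  have h1' : Real.sqrt Λ * ((1 - γ) * sInf S) ≤ 2 * π * (m:ℝ) ^ 2 := by
    have h2 := mul_le_mul_of_nonneg_left h1 hγpos.le
    rw [mul_div_cancel₀ _ hγpos.ne'] at h2
    nlinarith [h2]
  have h2 : Real.sqrt Λ ≤ 2 * π * (m:ℝ) ^ 2 / ((1 - γ) * sInf S) :=
    (le_div_iff₀ (mul_pos hγpos hSinf_pos)).mpr h1'
  calc Λ = Real.sqrt Λ ^ 2 := (Real.sq_sqrt hΛ.le).symm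
    _ ≤ (2 * π * (m:ℝ) ^ 2 / ((1 - γ) * sInf S)) ^ 2 :=
        pow_le_pow_left₀ (Real.sqrt_nonneg _) h2 2
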